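/- For all natural numbers i, j, n with i, j < 2^(n+1), binom(2(i+2^(n+1))+1, i-j) ≡ binom(2i+1, i-j) (mod 2). -/
import Mathlib

lemma choose_add_two_pow_mod_two (a : ℕ) : ∀ N k : ℕ, N < 2 ^ a → k < 2 ^ a →
    Nat.choose (N + 2 ^ a) k ≡ Nat.choose N k [MOD 2] := by
  induction a with
  | zero =>
    intro N k hN hk
    interval_cases N <;> interval_cases k <;> rfl
  | succ a ih =>
    intro N k hN hk
    haveI : Fact (Nat.Prime 2) := ⟨Nat.prime_two⟩
    have h1 := Choose.choose_modEq_choose_mod_mul_choose_div_nat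
      (n := N + 2 ^ (a + 1)) (k := k) (p := 2)
    have h2 := Choose.choose_modEq_choose_mod_mul_choose_div_nat
      (n := N) (k := k) (p := 2)
    have hmod : (N + 2 ^ (a + 1)) % 2 = N % 2 := by
      simp [pow_succ, Nat.add_mul_mod_self_right, Nat.mul_comm]
    have hdiv : (N + 2 ^ (a + 1)) / 2 = N / 2 + 2 ^ a := by
      omega
    rw [hmod, hdiv] at h1
    have hN2 : N / 2 < 2 ^ a := by omega
    have hk2 : k / 2 < 2 ^ a := by omega
    have h3 := ih (N / 2) (k / 2) hN2 hk2
    calc Nat.choose (N + 2 ^ (a + 1)) k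
        ≡ Nat.choose (N % 2) (k % 2) * Nat.choose (N / 2 + 2 ^ a) (k / 2) [MOD 2] := h1
      _ ≡ Nat.choose (N % 2) (k % 2) * Nat.choose (N / 2) (k / 2) [MOD 2] :=
          Nat.ModEq.mul_left _ h3
      _ ≡ Nat.choose N k [MOD 2] := h2.symm

/-- For `i, j < 2^(n+1)`:
`binom(2(i+2^(n+1))+1, i-j) ≡ binom(2i+1, i-j) (mod 2)` (truncated subtraction). -/
theorem choose_shift_mod_two (n i j : ℕ) (hi : i < 2 ^ (n + 1)) (hj : j < 2 ^ (n + 1)) :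
    Nat.choose (2 * (i + 2 ^ (n + 1)) + 1) (i - j) % 2 =
      Nat.choose (2 * i + 1) (i - j) % 2 := by
  have h : 2 * (i + 2 ^ (n + 1)) + 1 = (2 * i + 1) + 2 ^ (n + 2) := by ring
  rw [h]
  exact choose_add_two_pow_mod_two (n + 2) (2 * i + 1) (i - j)
    (by omega) (by omega)
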